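/- arXiv:2512.23952 — 5 statements merged into one kernel-verified Lean document; each statement's English description precedes it below -/
import Mathlib

section
/- For all real constants κ₁ < 0 and κ₂ > 0, the function g(r) = κ₁ / (1 − exp(κ₂·r)) is strictly convex on the interval (0, ∞). -/
/-- The fitted CPU-delay term `g(r) = κ₁ / (1 − exp(κ₂·r))` is strictly convex
on `(0, ∞)` for all `κ₁ < 0` and `κ₂ > 0`. -/
theorem cpu_delay_strict_convex
    (κ₁ κ₂ : ℝ) (hκ₁ : κ₁ < 0) (hκ₂ : 0 < κ₂) :
    StrictConvexOn ℝ (Set.Ioi (0 : ℝ))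
      (fun r : ℝ => κ₁ / (1 - Real.exp (κ₂ * r))) := by
  set u : ℝ → ℝ := fun x => Real.exp (κ₂ * x) with hu_def
  set f : ℝ → ℝ := fun r => κ₁ / (1 - Real.exp (κ₂ * r)) with hf_def
  have hudv : ∀ x : ℝ, HasDerivAt u (κ₂ * u x) x := by
    intro x
    have h := (Real.hasDerivAt_exp (κ₂ * x)).comp x ((hasDerivAt_id x).const_mul κ₂)
    exact h.congr_deriv (by simp [hu_def, mul_comm])
  have hone : ∀ x ∈ Set.Ioi (0:ℝ), 1 < u x := by
    intro x hx
    have hpos : (0:ℝ) < κ₂ * x := mul_pos hκ₂ hx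
    have := Real.add_one_le_exp (κ₂ * x)
    simp only [hu_def]
    linarith
  have hne : ∀ x ∈ Set.Ioi (0:ℝ), 1 - u x ≠ 0 := by
    intro x hx
    have := hone x hx
    linarith
  -- first derivative
  set F : ℝ → ℝ := fun x => κ₁ * κ₂ * u x / (1 - u x) ^ 2 with hF_def
  have hF : ∀ x ∈ Set.Ioi (0:ℝ), HasDerivAt f (F x) x := by
    intro x hx
    have hd : HasDerivAt (fun y => 1 - u y) (0 - κ₂ * u x) x :=
      ((hasDerivAt_const x (1:ℝ)).sub (hudv x))
    have h := (hasDerivAt_const x κ₁).div hd (hne x hx)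
    convert h using 1
    case e'_4 => rfl
    case e'_5 => rfl
    case e'_8 => rfl
    have h2 : (1 - u x) ^ 2 ≠ 0 := pow_ne_zero 2 (hne x hx)
    rw [div_eq_div_iff h2 h2]
    ring
  have hcont : ContinuousOn f (Set.Ioi (0:ℝ)) := fun x hx =>
    (hF x hx).differentiableAt.continuousAt.continuousWithinAt
  have hderivEq : Set.EqOn (deriv f) F (Set.Ioi 0) := fun x hx => (hF x hx).deriv
  -- second derivative
  set G : ℝ → ℝ := fun x => κ₁ * κ₂ ^ 2 * u x * (1 + u x) / (1 - u x) ^ 3 with hG_def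
  have hF' : ∀ x ∈ Set.Ioi (0:ℝ), HasDerivAt F (G x) x := by
    intro x hx
    have hN : HasDerivAt (fun y => κ₁ * κ₂ * u y) (κ₁ * κ₂ * (κ₂ * u x)) x :=
      (hudv x).const_mul (κ₁ * κ₂)
    have hD := ((hasDerivAt_const x (1:ℝ)).sub (hudv x)).pow 2
    have hDne : (1 - u x) ^ 2 ≠ 0 := pow_ne_zero 2 (hne x hx)
    have h := hN.div hD hDne
    convert h using 1
    case e'_4 => rfl
    case e'_5 => rfl
    case e'_8 => rfl
    have hne' := hne x hx
    have h3 : (1 - u x) ^ 3 ≠ 0 := pow_ne_zero 3 hne'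
    have h4 : ((1 - u x) ^ 2) ^ 2 ≠ 0 := pow_ne_zero 2 hDne
    simp only [hG_def, Pi.pow_apply, Pi.sub_apply]
    rw [div_eq_div_iff h3 h4]
    ring
  apply strictConvexOn_of_deriv2_pos (convex_Ioi 0) hcont
  intro x hx
  rw [interior_Ioi] at hx
  have hev : deriv f =ᶠ[nhds x] F :=
    Filter.eventuallyEq_of_mem (isOpen_Ioi.mem_nhds hx) hderivEq
  have h2 : deriv (deriv f) x = G x := by
    rw [hev.deriv_eq]
    exact (hF' x hx).deriv
  have hgu : 1 < u x := hone x hx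
  have hupos : 0 < u x := lt_trans one_pos hgu
  have hpos : 0 < κ₂ ^ 2 * (u x * (1 + u x)) :=
    mul_pos (pow_pos hκ₂ 2) (mul_pos hupos (by linarith))
  have hnum : κ₁ * κ₂ ^ 2 * u x * (1 + u x) < 0 := by
    have := mul_neg_of_neg_of_pos hκ₁ hpos
    nlinarith
  have hden : (1 - u x) ^ 3 < 0 :=
    Odd.pow_neg (by decide) (by linarith)
  simp only [Function.iterate_succ, Function.iterate_zero, Function.comp_apply, id]
  rw [h2]
  exact div_pos_of_neg_of_neg hnum hden
end

section
/- The per-container utility F(r_cpu, r_mem) = α·x̄·(g(r_cpu) + m(r_mem)) + c·r_cpu is a convex function on the open positive quadrant {(r_cpu, r_mem) : r_cpu > 0, r_mem > 0}, and for every fixed r_cpu > 0 the map r_mem ↦ F(r_cpu, r_mem) is strictly decreasing on (0, ∞). -/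
open Real Set

lemma g_hasDerivAt (κ₁ κ₂ : ℝ) (hκ₂ : 0 < κ₂) {r : ℝ} (hr : 0 < r) :
    HasDerivAt (fun r : ℝ => κ₁ / (1 - Real.exp (κ₂ * r)))
      (κ₁ * κ₂ * Real.exp (κ₂ * r) / (1 - Real.exp (κ₂ * r))^2) r := by
  have h1 : (1 : ℝ) < Real.exp (κ₂ * r) := by
    rw [Real.one_lt_exp_iff]; positivity
  have hne : 1 - Real.exp (κ₂ * r) ≠ 0 := by nlinarith
  have hu : HasDerivAt (fun r : ℝ => 1 - Real.exp (κ₂ * r))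
      (-(Real.exp (κ₂ * r) * κ₂)) r := by
    have := (((hasDerivAt_id r).const_mul κ₂).exp).const_sub 1
    simpa using this
  have := (hasDerivAt_const r κ₁).div hu hne
  refine this.congr_deriv ?_
  ring

lemma g_convexOn (κ₁ κ₂ : ℝ) (hκ₁ : κ₁ < 0) (hκ₂ : 0 < κ₂) :
    ConvexOn ℝ (Set.Ioi (0:ℝ)) (fun r : ℝ => κ₁ / (1 - Real.exp (κ₂ * r))) := by
  apply MonotoneOn.convexOn_of_deriv (convex_Ioi 0)
  · intro r hr
    have h1 : (1 : ℝ) < Real.exp (κ₂ * r) := by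
      rw [Real.one_lt_exp_iff]; exact mul_pos hκ₂ hr
    exact ((g_hasDerivAt κ₁ κ₂ hκ₂ hr).continuousAt).continuousWithinAt
  · intro r hr
    rw [interior_Ioi] at hr
    exact ((g_hasDerivAt κ₁ κ₂ hκ₂ hr).differentiableAt).differentiableWithinAt
  · rw [interior_Ioi]
    intro x hx y hy hxy
    rw [mem_Ioi] at hx hy
    rw [(g_hasDerivAt κ₁ κ₂ hκ₂ hx).deriv, (g_hasDerivAt κ₁ κ₂ hκ₂ hy).deriv]
    have hax : (1 : ℝ) < Real.exp (κ₂ * x) := by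
      rw [Real.one_lt_exp_iff]; exact mul_pos hκ₂ hx
    have hay : (1 : ℝ) < Real.exp (κ₂ * y) := by
      rw [Real.one_lt_exp_iff]; exact mul_pos hκ₂ hy
    have hab : Real.exp (κ₂ * x) ≤ Real.exp (κ₂ * y) := by
      apply Real.exp_le_exp.2
      exact mul_le_mul_of_nonneg_left hxy hκ₂.le
    set a := Real.exp (κ₂ * x)
    set b := Real.exp (κ₂ * y)
    have hxsq : (0:ℝ) < (1 - a)^2 := by nlinarith
    have hysq : (0:ℝ) < (1 - b)^2 := by nlinarith
    rw [div_le_div_iff₀ hxsq hysq]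
    have key : (b - a) * (a * b - 1) ≥ 0 :=
      mul_nonneg (sub_nonneg.2 hab) (by nlinarith)
    nlinarith [mul_nonneg (mul_nonneg (neg_nonneg.2 hκ₁.le) hκ₂.le) key]

lemma m_hasDerivAt (κ₃ : ℝ) {r : ℝ} (hr : 0 < r) :
    HasDerivAt (fun r : ℝ => Real.exp (κ₃ / r))
      (-(κ₃ * Real.exp (κ₃ / r) / r^2)) r := by
  have hu : HasDerivAt (fun r : ℝ => κ₃ / r) ((0 * r - κ₃ * 1) / r^2) r :=
    (hasDerivAt_const r κ₃).div (hasDerivAt_id r) hr.ne'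
  have := hu.exp
  convert this using 1
  field_simp
  ring

lemma m_convexOn (κ₃ : ℝ) (hκ₃ : 0 < κ₃) :
    ConvexOn ℝ (Set.Ioi (0:ℝ)) (fun r : ℝ => Real.exp (κ₃ / r)) := by
  apply MonotoneOn.convexOn_of_deriv (convex_Ioi 0)
  · intro r hr
    exact ((m_hasDerivAt κ₃ hr).continuousAt).continuousWithinAt
  · intro r hr
    rw [interior_Ioi] at hr
    exact ((m_hasDerivAt κ₃ hr).differentiableAt).differentiableWithinAt
  · rw [interior_Ioi]
    intro x hx y hy hxy
    rw [mem_Ioi] at hx hy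
    rw [(m_hasDerivAt κ₃ hx).deriv, (m_hasDerivAt κ₃ hy).deriv]
    have h1 : κ₃ / y ≤ κ₃ / x := by
      apply div_le_div_of_nonneg_left hκ₃.le hx hxy
    have h2 : Real.exp (κ₃ / y) ≤ Real.exp (κ₃ / x) := Real.exp_le_exp.2 h1
    have hx2 : (0:ℝ) < x^2 := by positivity
    have hy2 : (0:ℝ) < y^2 := by positivity
    have : κ₃ * Real.exp (κ₃ / y) / y^2 ≤ κ₃ * Real.exp (κ₃ / x) / x^2 := by
      apply div_le_div₀ (by positivity) (by nlinarith) hx2 (by nlinarith)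
    linarith

/-- The per-container utility
`F(r_cpu, r_mem) = α·x̄·(g(r_cpu) + m(r_mem)) + c·r_cpu`, with
`g(r) = κ₁/(1 − exp(κ₂·r))` and `m(r) = exp(κ₃/r)`, is convex on the open
positive quadrant, and for every fixed `r_cpu > 0` the map
`r_mem ↦ F(r_cpu, r_mem)` is strictly decreasing on `(0, ∞)`. -/
theorem per_container_utility_convex_and_mem_decreasing
    (κ₁ κ₂ κ₃ α xbar c : ℝ)
    (hκ₁ : κ₁ < 0) (hκ₂ : 0 < κ₂) (hκ₃ : 0 < κ₃)
    (hα : 0 < α) (hx : 0 < xbar) (hc : 0 ≤ c) :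
    ConvexOn ℝ (Set.Ioi (0 : ℝ) ×ˢ Set.Ioi (0 : ℝ))
      (fun p : ℝ × ℝ =>
        α * xbar * (κ₁ / (1 - Real.exp (κ₂ * p.1)) + Real.exp (κ₃ / p.2))
          + c * p.1) ∧
    ∀ rcpu : ℝ, 0 < rcpu →
      StrictAntiOn
        (fun rmem : ℝ =>
          α * xbar * (κ₁ / (1 - Real.exp (κ₂ * rcpu)) + Real.exp (κ₃ / rmem))
            + c * rcpu)
        (Set.Ioi (0 : ℝ)) := by
  have hg := g_convexOn κ₁ κ₂ hκ₁ hκ₂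
  have hm := m_convexOn κ₃ hκ₃
  have hαx : (0:ℝ) < α * xbar := mul_pos hα hx
  constructor
  · refine ⟨(convex_Ioi 0).prod (convex_Ioi 0), ?_⟩
    rintro ⟨p1, p2⟩ ⟨hp1, hp2⟩ ⟨q1, q2⟩ ⟨hq1, hq2⟩ a b ha hb hab
    have Hg := hg.2 hp1 hq1 ha hb hab
    have Hm := hm.2 hp2 hq2 ha hb hab
    simp only [smul_eq_mul, Prod.smul_mk, Prod.mk_add_mk, Prod.fst, Prod.snd] at *
    have Hg' := mul_le_mul_of_nonneg_left Hg hαx.le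
    have Hm' := mul_le_mul_of_nonneg_left Hm hαx.le
    nlinarith
  · intro rcpu hrcpu x hx' y hy' hxy
    simp only
    have h1 : κ₃ / y < κ₃ / x := div_lt_div_of_pos_left hκ₃ hx' hxy
    have h2 : Real.exp (κ₃ / y) < Real.exp (κ₃ / x) := Real.exp_lt_exp.2 h1
    nlinarith
end

section
/- Under the memory bounds 0 < r_min ≤ r_max, for every fixed r_cpu > 0 and every r_mem with r_min ≤ r_mem ≤ r_max, one has F(r_cpu, r_max) ≤ F(r_cpu, r_mem); that is, the optimal memory allocation for the sufficient-resource subproblem SP1 is attained at the upper bound r_mem = r_max. -/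
/-- Under memory bounds `0 < r_min ≤ r_max`, for every fixed `r_cpu > 0` and
every `r_mem` with `r_min ≤ r_mem ≤ r_max`, one has
`F(r_cpu, r_max) ≤ F(r_cpu, r_mem)`, where
`F(r_cpu, r_mem) = α·x̄·(κ₁/(1 − exp(κ₂·r_cpu)) + exp(κ₃/r_mem)) + c·r_cpu`:
the optimal memory allocation of subproblem SP1 is attained at `r_mem = r_max`. -/
theorem sp1_memory_optimal_at_upper_bound
    (κ₁ κ₂ κ₃ α xbar c rmin rmax : ℝ)
    (hκ₁ : κ₁ < 0) (hκ₂ : 0 < κ₂) (hκ₃ : 0 < κ₃)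
    (hα : 0 < α) (hx : 0 < xbar) (hc : 0 ≤ c)
    (hrmin : 0 < rmin) (hbounds : rmin ≤ rmax)
    (rcpu : ℝ) (hrcpu : 0 < rcpu)
    (rmem : ℝ) (h₁ : rmin ≤ rmem) (h₂ : rmem ≤ rmax) :
    α * xbar * (κ₁ / (1 - Real.exp (κ₂ * rcpu)) + Real.exp (κ₃ / rmax))
        + c * rcpu ≤
      α * xbar * (κ₁ / (1 - Real.exp (κ₂ * rcpu)) + Real.exp (κ₃ / rmem))
        + c * rcpu := by
  have hmem : 0 < rmem := lt_of_lt_of_le hrmin h₁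
  have hdiv : κ₃ / rmax ≤ κ₃ / rmem :=
    div_le_div_of_nonneg_left hκ₃.le hmem h₂
  have hexp : Real.exp (κ₃ / rmax) ≤ Real.exp (κ₃ / rmem) :=
    Real.exp_le_exp.mpr hdiv
  have hax : 0 ≤ α * xbar := (mul_pos hα hx).le
  nlinarith [mul_le_mul_of_nonneg_left hexp hax]
end

section
/- For every arrival rate λ > 0 and service rate μ > 0, the M/M/N expected response time is discretely convex in the number of servers: for every integer N ≥ 2 with λ < (N − 1)·μ, one has W_s(N + 1, λ, μ) + W_s(N − 1, λ, μ) ≥ 2·W_s(N, λ, μ). -/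
/-- Steady-state empty-system probability of the M/M/N queue. -/
noncomputable def pi0 (N : ℕ) (lam mu : ℝ) : ℝ :=
  (∑ k ∈ Finset.range N, (1 / (Nat.factorial k : ℝ)) * (lam / mu) ^ k +
      (lam / mu) ^ N / ((Nat.factorial N : ℝ) * (1 - lam / (N * mu))))⁻¹

/-- Expected number of requests in the M/M/N system. -/
noncomputable def Ls (N : ℕ) (lam mu : ℝ) : ℝ :=
  ((lam / mu) ^ N * (lam / (N * mu)) /
      ((Nat.factorial N : ℝ) * (1 - lam / (N * mu)) ^ 2)) * pi0 N lam mu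
    + lam / mu

/-- Expected response time of the M/M/N queue (Little's law). -/
noncomputable def Ws (N : ℕ) (lam mu : ℝ) : ℝ := Ls N lam mu / lam

set_option maxHeartbeats 1000000

namespace MMnAux

noncomputable def betaE (x : ℝ) : ℕ → ℝ
  | 0 => 1
  | (M+1) => 1 + ((M : ℝ) + 1) * x * betaE x M

lemma betaE_nonneg (x : ℝ) (hx : 0 ≤ x) : ∀ M, 0 ≤ betaE x M
  | 0 => by norm_num [betaE]
  | (M+1) => by
    have h := betaE_nonneg x hx M
    simp only [betaE]
    positivity

lemma betaE_succ (x : ℝ) (M : ℕ) :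
    betaE x (M+1) = 1 + ((M : ℝ) + 1) * x * betaE x M := rfl

lemma sum_eq (ρ : ℝ) (hρ : ρ ≠ 0) : ∀ M : ℕ,
    ∑ k ∈ Finset.range (M+1), (1 / (Nat.factorial k : ℝ)) * ρ ^ k
      = ρ ^ M / (Nat.factorial M : ℝ) * betaE ρ⁻¹ M
  | 0 => by simp [betaE]
  | (M+1) => by
    have hf : (Nat.factorial M : ℝ) ≠ 0 := Nat.cast_ne_zero.2 (Nat.factorial_ne_zero M)
    rw [Finset.sum_range_succ, sum_eq ρ hρ M, betaE_succ, Nat.factorial_succ]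
    push_cast
    field_simp
    ring

lemma key (R c V m : ℝ) (hR : 0 ≤ R) (hc : 0 ≤ c) (hV : 0 ≤ V) (hm : 0 ≤ m) :
    2 * (c*(c*V+R)) * ((c+2*m)*((c+2*m)*(R^2+(R+c+m)*(R+(R+c)*V))+R^3)) * R ≤
      ((c+m)*((c+m)*(R+(R+c)*V)+R^2)) *
        (R^2*(c*(c*V+R)) + (c+2*m)*((c+2*m)*(R^2+(R+c+m)*(R+(R+c)*V))+R^3)) := by
  nlinarith [sq_nonneg R, mul_nonneg hR hc,
    (by positivity :
      (0:ℝ) ≤ 4*c^2*V^2*m^5 + 16*c^3*V^2*m^4 + 25*c^4*V^2*m^3 + 19*c^5*V^2*m^2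
      + 7*c^6*V^2*m + 1*c^7*V^2 + 8*R*c*V*m^5 + 8*R*c*V^2*m^5 + 32*R*c^2*V*m^4
      + 36*R*c^2*V^2*m^4 + 50*R*c^3*V*m^3 + 54*R*c^3*V^2*m^3 + 38*R*c^4*V*m^2
      + 35*R*c^4*V^2*m^2 + 14*R*c^5*V*m + 10*R*c^5*V^2*m + 2*R*c^6*V + 1*R*c^6*V^2
      + 4*R^2*m^5 + 8*R^2*V*m^5 + 4*R^2*V^2*m^5 + 16*R^2*c*m^4 + 48*R^2*c*V*m^4
      + 24*R^2*c*V^2*m^4 + 25*R^2*c^2*m^3 + 82*R^2*c^2*V*m^3 + 41*R^2*c^2*V^2*m^3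
      + 19*R^2*c^3*m^2 + 58*R^2*c^3*V*m^2 + 22*R^2*c^3*V^2*m^2 + 7*R^2*c^4*m
      + 18*R^2*c^4*V*m + 3*R^2*c^4*V^2*m + 1*R^2*c^5 + 2*R^2*c^5*V + 12*R^3*m^4
      + 16*R^3*V*m^4 + 4*R^3*V^2*m^4 + 28*R^3*c*m^3 + 46*R^3*c*V*m^3 + 12*R^3*c*V^2*m^3
      + 23*R^3*c^2*m^2 + 27*R^3*c^2*V*m^2 + 6*R^3*c^2*V^2*m^2 + 8*R^3*c^3*m
      + 3*R^3*c^3*V*m + 1*R^3*c^4 + 10*R^4*m^3 + 6*R^4*V*m^3 + 6*R^4*c*m^2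
      + 6*R^4*c*V*m^2 + 2*R^5*m^2)]

lemma main_ineq (R m c V B1 B2 : ℝ) (hR : 0 < R) (hm : 0 < m) (hc : 0 < c)
    (hV : 0 ≤ V) (hB1 : 0 ≤ B1) (hB2 : 0 ≤ B2)
    (eB1 : R * B1 = R + (R + c) * V)
    (eB2 : R * B2 = R + (R + c + m) * B1) :
    2 / ((c+m)*((c+m)*B1+R)) ≤ 1 / ((c+2*m)*((c+2*m)*B2+R)) + 1 / (c*(c*V+R)) := by
  have hG1 : 0 < c*(c*V+R) := by
    have : 0 ≤ c*V := mul_nonneg hc.le hV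
    nlinarith
  have hG2 : 0 < (c+m)*((c+m)*B1+R) := by
    nlinarith [mul_nonneg (by linarith : (0:ℝ) ≤ c+m) hB1]
  have hG3 : 0 < (c+2*m)*((c+2*m)*B2+R) := by
    nlinarith [mul_nonneg (by linarith : (0:ℝ) ≤ c+2*m) hB2]
  rw [div_add_div _ _ hG3.ne' hG1.ne', div_le_div_iff₀ hG2 (mul_pos hG3 hG1)]
  have h2' : R*((c+m)*((c+m)*B1+R)) = (c+m)*((c+m)*(R+(R+c)*V)+R^2) := by
    linear_combination (c+m)^2 * eB1
  have h3' : R^2*((c+2*m)*((c+2*m)*B2+R))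
      = (c+2*m)*((c+2*m)*(R^2+(R+c+m)*(R+(R+c)*V))+R^3) := by
    linear_combination (c+2*m)^2*R*eB2 + (c+2*m)^2*(R+c+m)*eB1
  have K := key R c V m hR.le hc.le hV hm.le
  have hscale : R^3 * (2 * ((c+2*m)*((c+2*m)*B2+R) * (c*(c*V+R)))) ≤
      R^3 * (((c*(c*V+R)) + (c+2*m)*((c+2*m)*B2+R)) * ((c+m)*((c+m)*B1+R))) := by
    have eL : R^3 * (2 * ((c+2*m)*((c+2*m)*B2+R) * (c*(c*V+R)))) =
        2 * (c*(c*V+R)) * ((c+2*m)*((c+2*m)*(R^2+(R+c+m)*(R+(R+c)*V))+R^3)) * R := by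
      linear_combination (2*R*(c*(c*V+R))) * h3'
    have eR : R^3 * (((c*(c*V+R)) + (c+2*m)*((c+2*m)*B2+R)) * ((c+m)*((c+m)*B1+R))) =
        ((c+m)*((c+m)*(R+(R+c)*V)+R^2)) *
          (R^2*(c*(c*V+R)) + (c+2*m)*((c+2*m)*(R^2+(R+c+m)*(R+(R+c)*V))+R^3)) := by
      linear_combination (R^2*(c*(c*V+R)) + R^2*((c+2*m)*((c+2*m)*B2+R))) * h2' +
        ((c+m)*((c+m)*(R+(R+c)*V)+R^2)) * h3'
    linarith [K, eL.ge, eR.le]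
  have hR3 : (0:ℝ) < R^3 := by positivity
  nlinarith [hscale, hR3]

lemma Ws_closed (lam mu : ℝ) (hlam : 0 < lam) (hmu : 0 < mu) (M : ℕ)
    (h : lam < ((M : ℝ) + 1) * mu) :
    Ws (M+1) lam mu =
      lam / (((((M:ℝ)+1)*mu) - lam) *
        (((((M:ℝ)+1)*mu) - lam) * betaE (lam/mu)⁻¹ M + lam)) + 1/mu := by
  have hρ : 0 < lam/mu := div_pos hlam hmu
  have hβ : 0 ≤ betaE (lam/mu)⁻¹ M := betaE_nonneg _ (by positivity) M
  have hM1 : (0:ℝ) < (M:ℝ)+1 := by positivity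
  have hc : 0 < ((M:ℝ)+1)*mu - lam := by linarith
  have hfM : (Nat.factorial M : ℝ) ≠ 0 := Nat.cast_ne_zero.2 (Nat.factorial_ne_zero M)
  have hG : 0 < (((M:ℝ)+1)*mu - lam) * betaE (lam/mu)⁻¹ M + lam := by
    have := mul_nonneg hc.le hβ; linarith
  have hcast : ((M+1 : ℕ) : ℝ) = (M:ℝ)+1 := by push_cast; ring
  have hden : 1 - lam/(((M:ℝ)+1)*mu) = (((M:ℝ)+1)*mu - lam)/(((M:ℝ)+1)*mu) := by
    rw [eq_div_iff (by positivity)]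
    field_simp
  have hpow : (lam/mu)^(M+1) = (lam/mu)^M * (lam/mu) := pow_succ _ _
  have hpi : pi0 (M+1) lam mu
      = ((Nat.factorial M : ℝ) * ((((M:ℝ)+1)*mu - lam)) * mu ^ M) /
        (lam^M * (((((M:ℝ)+1)*mu) - lam) * betaE (lam/mu)⁻¹ M + lam)) := by
    unfold pi0
    rw [sum_eq (lam/mu) hρ.ne' M, Nat.factorial_succ, hcast, hden, hpow]
    rw [inv_eq_iff_eq_inv]
    rw [inv_div]
    simp only [div_pow]
    field_simp
    have hc' : mu + mu * (M:ℝ) - lam ≠ 0 := by linarith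
    field_simp
    push_cast
    have hID : (mu + mu * (M:ℝ) - lam) * (mu + mu * (M:ℝ) - lam)⁻¹ = 1 := mul_inv_cancel₀ hc'
    linear_combination (-(betaE (mu / lam) M * ((M:ℝ)+1) * (Nat.factorial M : ℝ))) * hID
  have hQpi : (lam / mu) ^ (M+1) * (lam / ((M+1 : ℕ) * mu)) /
        ((Nat.factorial (M+1) : ℝ) * (1 - lam / ((M+1 : ℕ) * mu)) ^ 2) *
        pi0 (M+1) lam mu
      = lam^2 / (((((M:ℝ)+1)*mu) - lam) *
          (((((M:ℝ)+1)*mu) - lam) * betaE (lam/mu)⁻¹ M + lam)) := by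
    rw [hpi, Nat.factorial_succ, hcast, hden, hpow]
    push_cast
    have hs : 0 < ((((M:ℝ)+1)*mu - lam)/(((M:ℝ)+1)*mu)) := div_pos hc (by positivity)
    have hfMpos : (0:ℝ) < (Nat.factorial M : ℝ) :=
      Nat.cast_pos.2 (Nat.factorial_pos M)
    have hZ : (0:ℝ) < (((M:ℝ)+1) * (Nat.factorial M : ℝ)) *
        (((((M:ℝ)+1)*mu - lam)/(((M:ℝ)+1)*mu))^2) :=
      mul_pos (by positivity) (pow_pos hs 2)
    have hQ : (0:ℝ) < lam^M * (((((M:ℝ)+1)*mu) - lam) * betaE (lam/mu)⁻¹ M + lam) :=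
      mul_pos (pow_pos hlam M) hG
    rw [div_mul_div_comm, div_eq_div_iff (by positivity) (mul_pos hc hG).ne']
    simp only [div_pow]
    field_simp
  unfold Ws Ls
  rw [hQpi]
  field_simp

end MMnAux

/-- The M/M/N expected response time is discretely convex in the number of
servers: for every integer `N ≥ 2` with `λ < (N − 1)·μ`, one has
`W_s(N + 1, λ, μ) + W_s(N − 1, λ, μ) ≥ 2·W_s(N, λ, μ)`. -/
theorem Ws_discrete_convex
    (lam mu : ℝ) (hlam : 0 < lam) (hmu : 0 < mu)
    (N : ℕ) (hN : 2 ≤ N) (hstab : lam < ((N : ℝ) - 1) * mu) :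
    2 * Ws N lam mu ≤ Ws (N + 1) lam mu + Ws (N - 1) lam mu := by
  obtain ⟨n, rfl⟩ : ∃ n, N = n + 2 := ⟨N - 2, by omega⟩
  have hs1 : lam < ((n:ℝ) + 1) * mu := by push_cast at hstab; linarith
  have hs2 : lam < (((n+1 : ℕ):ℝ) + 1) * mu := by push_cast; nlinarith
  have hs3 : lam < (((n+2 : ℕ):ℝ) + 1) * mu := by push_cast; nlinarith
  show 2 * Ws (n+1+1) lam mu ≤ Ws ((n+2)+1) lam mu + Ws (n+1) lam mu
  rw [MMnAux.Ws_closed lam mu hlam hmu n hs1,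
      MMnAux.Ws_closed lam mu hlam hmu (n+1) hs2,
      MMnAux.Ws_closed lam mu hlam hmu (n+2) hs3]
  push_cast
  have hc1 : 0 < ((n:ℝ)+1)*mu - lam := by linarith
  have hx : (0:ℝ) ≤ (lam/mu)⁻¹ := by positivity
  have hV : 0 ≤ MMnAux.betaE (lam/mu)⁻¹ n := MMnAux.betaE_nonneg _ hx n
  have hB1 : 0 ≤ MMnAux.betaE (lam/mu)⁻¹ (n+1) := MMnAux.betaE_nonneg _ hx (n+1)
  have hB2 : 0 ≤ MMnAux.betaE (lam/mu)⁻¹ (n+2) := MMnAux.betaE_nonneg _ hx (n+2)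
  have hlx : lam * (lam/mu)⁻¹ = mu := by field_simp
  have eB1 : lam * MMnAux.betaE (lam/mu)⁻¹ (n+1)
      = lam + (lam + (((n:ℝ)+1)*mu - lam)) * MMnAux.betaE (lam/mu)⁻¹ n := by
    rw [MMnAux.betaE_succ]
    linear_combination (((n:ℝ)+1) * MMnAux.betaE (lam/mu)⁻¹ n) * hlx
  have eB2 : lam * MMnAux.betaE (lam/mu)⁻¹ (n+2)
      = lam + (lam + (((n:ℝ)+1)*mu - lam) + mu) * MMnAux.betaE (lam/mu)⁻¹ (n+1) := by
    rw [show (n+2) = (n+1)+1 from rfl, MMnAux.betaE_succ]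
    push_cast
    linear_combination (((n:ℝ)+2) * MMnAux.betaE (lam/mu)⁻¹ (n+1)) * hlx
  have MI := MMnAux.main_ineq lam mu (((n:ℝ)+1)*mu - lam)
    (MMnAux.betaE (lam/mu)⁻¹ n) (MMnAux.betaE (lam/mu)⁻¹ (n+1))
    (MMnAux.betaE (lam/mu)⁻¹ (n+2)) hlam hmu hc1 hV hB1 hB2 eB1 eB2
  rw [show ((n:ℝ)+1+1)*mu - lam = (((n:ℝ)+1)*mu - lam) + mu by ring,
      show ((n:ℝ)+2+1)*mu - lam = (((n:ℝ)+1)*mu - lam) + 2*mu by ring]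
  have MI2 := mul_le_mul_of_nonneg_left MI hlam.le
  ring_nf at MI2 ⊢
  linarith [MI2]
end

section
/- Fix real constants κ₁ < 0, κ₂ > 0, κ₃ > 0, α > 0, a > 0 and c ≥ 0. Let h : ℝ → ℝ be convex on (0, ∞) and monotone nondecreasing on (0, ∞). Then the function U(r_cpu, r_mem) = α·h(a·(g(r_cpu) + m(r_mem))) + c·r_cpu is convex on the open positive quadrant {(r_cpu, r_mem) : r_cpu > 0, r_mem > 0}. -/
open Set Real

/-- Composition with `MapsTo` instead of image: convex ∘ convex with monotone outer. -/
lemma convexOn_comp_mapsTo {s t : Set ℝ} {f g : ℝ → ℝ}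
    (hg : ConvexOn ℝ t g) (hf : ConvexOn ℝ s f) (hmaps : Set.MapsTo f s t)
    (hg' : MonotoneOn g t) : ConvexOn ℝ s (fun x => g (f x)) :=
  ⟨hf.1, fun x hx y hy a b ha hb hab =>
    (hg' (hmaps (hf.1 hx hy ha hb hab)) (hg.1 (hmaps hx) (hmaps hy) ha hb hab)
        (hf.2 hx hy ha hb hab)).trans (hg.2 (hmaps hx) (hmaps hy) ha hb hab)⟩

/-- Composition: convex antitone outer with concave inner. -/
lemma convexOn_comp_concave_mapsTo {s t : Set ℝ} {f g : ℝ → ℝ}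
    (hg : ConvexOn ℝ t g) (hf : ConcaveOn ℝ s f) (hmaps : Set.MapsTo f s t)
    (hg' : AntitoneOn g t) : ConvexOn ℝ s (fun x => g (f x)) :=
  ⟨hf.1, fun x hx y hy a b ha hb hab =>
    (hg' (hg.1 (hmaps hx) (hmaps hy) ha hb hab) (hmaps (hf.1 hx hy ha hb hab))
        (hf.2 hx hy ha hb hab)).trans (hg.2 (hmaps hx) (hmaps hy) ha hb hab)⟩

lemma convexOn_inv_Ioi : ConvexOn ℝ (Set.Ioi (0:ℝ)) (fun x : ℝ => x⁻¹) := by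
  have := convexOn_zpow (𝕜 := ℝ) (-1)
  simpa [zpow_neg_one] using this

lemma antitoneOn_inv_Ioi : AntitoneOn (fun x : ℝ => x⁻¹) (Set.Ioi (0:ℝ)) := by
  intro x hx y hy hxy
  exact inv_anti₀ hx hxy

lemma convexOn_fst_comp {f : ℝ → ℝ} {s t : Set ℝ} (ht : Convex ℝ t)
    (hf : ConvexOn ℝ s f) : ConvexOn ℝ (s ×ˢ t) (fun p : ℝ × ℝ => f p.1) :=
  ⟨hf.1.prod ht, fun p hp q hq a b ha hb hab => hf.2 hp.1 hq.1 ha hb hab⟩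

lemma convexOn_snd_comp {f : ℝ → ℝ} {s t : Set ℝ} (hs : Convex ℝ s)
    (hf : ConvexOn ℝ t f) : ConvexOn ℝ (s ×ˢ t) (fun p : ℝ × ℝ => f p.2) :=
  ⟨hs.prod hf.1, fun p hp q hq a b ha hb hab => hf.2 hp.2 hq.2 ha hb hab⟩

/-- `y ↦ (1 - y)⁻¹` is convex on `Iio 1`. -/
lemma convexOn_one_sub_inv : ConvexOn ℝ (Set.Iio (1:ℝ)) (fun y : ℝ => (1 - y)⁻¹) := by
  have hconc : ConcaveOn ℝ (Set.Iio (1:ℝ)) (fun y : ℝ => 1 - y) :=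
    ⟨convex_Iio 1, by
      intro x _ y _ a b ha hb hab
      simp only [smul_eq_mul]
      nlinarith⟩
  exact convexOn_comp_concave_mapsTo convexOn_inv_Ioi hconc
    (fun y hy => by simp only [Set.mem_Ioi]; linarith [Set.mem_Iio.mp hy])
    antitoneOn_inv_Ioi

lemma monotoneOn_one_sub_inv : MonotoneOn (fun y : ℝ => (1 - y)⁻¹) (Set.Iio (1:ℝ)) := by
  intro x hx y hy hxy
  have h1 : (0:ℝ) < 1 - y := by linarith [Set.mem_Iio.mp hy]
  exact inv_anti₀ h1 (by linarith)

/-- `r ↦ exp (-(κ₂ * r))` is convex on `Ioi 0`. -/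
lemma convexOn_exp_neg (κ₂ : ℝ) :
    ConvexOn ℝ (Set.Ioi (0:ℝ)) (fun r : ℝ => Real.exp (-(κ₂ * r))) := by
  have hlin : ConvexOn ℝ (Set.Ioi (0:ℝ)) (fun r : ℝ => -(κ₂ * r)) :=
    ⟨convex_Ioi 0, by
      intro x _ y _ a b ha hb hab
      simp only [smul_eq_mul]
      nlinarith⟩
  exact convexOn_comp_mapsTo convexOn_exp hlin (fun x _ => Set.mem_univ _)
    (Real.exp_monotone.monotoneOn _)

/-- Let `h : ℝ → ℝ` be convex and monotone nondecreasing on `(0, ∞)`. Then,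
with `g(r) = κ₁/(1 − exp(κ₂·r))`, `m(r) = exp(κ₃/r)`, `α > 0`, `a > 0` and
`c ≥ 0`, the function
`U(r_cpu, r_mem) = α·h(a·(g(r_cpu) + m(r_mem))) + c·r_cpu`
is convex on the open positive quadrant. -/
theorem composed_utility_convex
    (κ₁ κ₂ κ₃ α a c : ℝ)
    (hκ₁ : κ₁ < 0) (hκ₂ : 0 < κ₂) (hκ₃ : 0 < κ₃)
    (hα : 0 < α) (ha : 0 < a) (hc : 0 ≤ c)
    (h : ℝ → ℝ)
    (hconv : ConvexOn ℝ (Set.Ioi (0 : ℝ)) h)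
    (hmono : MonotoneOn h (Set.Ioi (0 : ℝ))) :
    ConvexOn ℝ (Set.Ioi (0 : ℝ) ×ˢ Set.Ioi (0 : ℝ))
      (fun p : ℝ × ℝ =>
        α * h (a * (κ₁ / (1 - Real.exp (κ₂ * p.1)) + Real.exp (κ₃ / p.2)))
          + c * p.1) := by
  have hIoi : Convex ℝ (Set.Ioi (0:ℝ)) := convex_Ioi 0
  -- pointwise identity for the CPU term
  have hgeq : ∀ r : ℝ, 0 < r →
      κ₁ / (1 - Real.exp (κ₂ * r))
        = (-κ₁) * (1 - Real.exp (-(κ₂ * r)))⁻¹ + κ₁ := by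
    intro r hr
    have hx : 0 < κ₂ * r := mul_pos hκ₂ hr
    have hE1 : 1 < Real.exp (κ₂ * r) := by
      calc (1:ℝ) = Real.exp 0 := Real.exp_zero.symm
        _ < Real.exp (κ₂ * r) := Real.exp_lt_exp.mpr hx
    have hE0 : Real.exp (κ₂ * r) ≠ 0 := (Real.exp_pos _).ne'
    have hne1 : 1 - Real.exp (κ₂ * r) ≠ 0 := by linarith
    have hneg : Real.exp (-(κ₂ * r)) = (Real.exp (κ₂ * r))⁻¹ := Real.exp_neg _
    have hne2 : 1 - (Real.exp (κ₂ * r))⁻¹ ≠ 0 := by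
      have : (Real.exp (κ₂ * r))⁻¹ < 1 := by
        rw [inv_lt_one_iff₀]; right; exact hE1
      linarith
    have hne1' : -1 + Real.exp (κ₂ * r) ≠ 0 := by
      intro hcon; apply hne1; linarith
    have hinv : (-1 + Real.exp (κ₂ * r)) * (-1 + Real.exp (κ₂ * r))⁻¹ = 1 :=
      mul_inv_cancel₀ hne1'
    rw [hneg]
    field_simp
    linear_combination (-(κ₁ * Real.exp (κ₂ * r))) * hinv
  -- positivity of the CPU term
  have hgpos : ∀ r : ℝ, 0 < r → 0 < κ₁ / (1 - Real.exp (κ₂ * r)) := by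
    intro r hr
    have hE1 : 1 < Real.exp (κ₂ * r) := by
      calc (1:ℝ) = Real.exp 0 := Real.exp_zero.symm
        _ < Real.exp (κ₂ * r) := Real.exp_lt_exp.mpr (mul_pos hκ₂ hr)
    exact div_pos_of_neg_of_neg hκ₁ (by linarith)
  -- convexity of the CPU term g on Ioi 0
  have hgconv : ConvexOn ℝ (Set.Ioi (0:ℝ))
      (fun r : ℝ => κ₁ / (1 - Real.exp (κ₂ * r))) := by
    have hmaps : Set.MapsTo (fun r : ℝ => Real.exp (-(κ₂ * r))) (Set.Ioi (0:ℝ))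
        (Set.Iio (1:ℝ)) := by
      intro r hr
      have : -(κ₂ * r) < 0 := by
        have := mul_pos hκ₂ (Set.mem_Ioi.mp hr); linarith
      simpa [Set.mem_Iio] using Real.exp_lt_one_iff.mpr this
    have hcomp : ConvexOn ℝ (Set.Ioi (0:ℝ))
        (fun r : ℝ => (1 - Real.exp (-(κ₂ * r)))⁻¹) :=
      convexOn_comp_mapsTo (g := fun y : ℝ => (1 - y)⁻¹) (f := fun r : ℝ => Real.exp (-(κ₂ * r))) convexOn_one_sub_inv (convexOn_exp_neg κ₂) hmaps
        monotoneOn_one_sub_inv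
    have hsmul := hcomp.smul (c := -κ₁) (by linarith)
    have hadd := hsmul.add (convexOn_const κ₁ hIoi)
    refine hadd.congr ?_
    intro r hr
    simp only [smul_eq_mul]
    exact (hgeq r (Set.mem_Ioi.mp hr)).symm
  -- convexity of the memory term on Ioi 0
  have hmconv : ConvexOn ℝ (Set.Ioi (0:ℝ)) (fun r : ℝ => Real.exp (κ₃ / r)) := by
    have hinner : ConvexOn ℝ (Set.Ioi (0:ℝ)) (fun r : ℝ => κ₃ / r) := by
      have := (convexOn_inv_Ioi.smul (c := κ₃) hκ₃.le)
      refine this.congr ?_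
      intro r _
      simp [div_eq_mul_inv, smul_eq_mul]
    exact convexOn_comp_mapsTo convexOn_exp hinner (fun x _ => Set.mem_univ _)
      (Real.exp_monotone.monotoneOn _)
  -- inner function on the product
  set G : ℝ × ℝ → ℝ :=
    fun p => a * (κ₁ / (1 - Real.exp (κ₂ * p.1)) + Real.exp (κ₃ / p.2)) with hGdef
  have hGconv : ConvexOn ℝ (Set.Ioi (0:ℝ) ×ˢ Set.Ioi (0:ℝ)) G := by
    have h1 := convexOn_fst_comp hIoi hgconv
    have h2 := convexOn_snd_comp hIoi hmconv
    have hsum := h1.add h2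
    have := hsum.smul (c := a) ha.le
    refine this.congr ?_
    intro p _
    simp [hGdef, smul_eq_mul, mul_add]
  have hGmaps : Set.MapsTo G (Set.Ioi (0:ℝ) ×ˢ Set.Ioi (0:ℝ)) (Set.Ioi (0:ℝ)) := by
    intro p hp
    have h1 := hgpos p.1 (Set.mem_Ioi.mp hp.1)
    have h2 := Real.exp_pos (κ₃ / p.2)
    have : 0 < G p := by
      apply mul_pos ha
      linarith
    exact Set.mem_Ioi.mpr this
  have hhG : ConvexOn ℝ (Set.Ioi (0:ℝ) ×ˢ Set.Ioi (0:ℝ)) (fun p => h (G p)) :=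
    ⟨hGconv.1, fun x hx y hy b₁ b₂ hb₁ hb₂ hab =>
      (hmono (hGmaps (hGconv.1 hx hy hb₁ hb₂ hab))
          (hconv.1 (hGmaps hx) (hGmaps hy) hb₁ hb₂ hab)
          (hGconv.2 hx hy hb₁ hb₂ hab)).trans
        (hconv.2 (hGmaps hx) (hGmaps hy) hb₁ hb₂ hab)⟩
  have hαh := hhG.smul (c := α) hα.le
  have hlin : ConvexOn ℝ (Set.Ioi (0:ℝ) ×ˢ Set.Ioi (0:ℝ)) (fun p : ℝ × ℝ => c * p.1) :=
    ⟨hIoi.prod hIoi, by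
      intro x _ y _ b₁ b₂ hb₁ hb₂ hab
      simp only [Prod.smul_fst, Prod.fst_add, smul_eq_mul]
      nlinarith⟩
  have := hαh.add hlin
  refine this.congr ?_
  intro p _
  simp [hGdef, smul_eq_mul]
end
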